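/- (Basis) Let X be a random variable with support N_n = {1,…,n} and p_1 ≥ … ≥ p_n > 0, and let (A_⟨α⟩, ⟨α⟩ ∈ Ω) be its binary partition random variables. Then for every ⟨α⟩ ∈ Ω there exist ⟨β_1⟩, …, ⟨β_{n−2}⟩ ∈ Ω such that H(A_⟨β_k⟩ | A_⟨α⟩, A_⟨β_1⟩, …, A_⟨β_{k−1}⟩) > 0 for all k = 1, …, n−2. -/

import Mathlib

open scoped BigOperators

/-- Probability of an event under a pmf `μ` on a finite outcome space. -/
noncomputable def probOf {Ω : Type*} [Fintype Ω] (μ : Ω → ℝ) (E : Set Ω) : ℝ :=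
  ∑ ω, E.indicator μ ω

/-- Shannon entropy (in bits) of the random variable `X` on the finite
probability space `(Ω, μ)`. -/
noncomputable def shEntropy {Ω : Type*} {S : Type*} [Fintype Ω] (μ : Ω → ℝ) (X : Ω → S) : ℝ :=
  ∑ ω, μ ω * (- Real.logb 2 (probOf μ {ω' | X ω' = X ω}))

/-- Conditional Shannon entropy `H(Y | X)` (in bits). -/
noncomputable def shCondEntropy {Ω S T : Type*} [Fintype Ω] (μ : Ω → ℝ)
    (Y : Ω → T) (X : Ω → S) : ℝ :=
  shEntropy μ (fun ω => (X ω, Y ω)) - shEntropy μ X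

/-- The support of the random variable `X` (values taken with positive probability). -/
noncomputable def rvSupport {Ω S : Type*} [Fintype Ω] (μ : Ω → ℝ) (X : Ω → S) : Finset S := by
  classical exact (Finset.univ.filter fun ω => 0 < μ ω).image X

/-- `μ` is a probability mass function. -/
def IsPMF {Ω : Type*} [Fintype Ω] (μ : Ω → ℝ) : Prop :=
  (∀ ω, 0 ≤ μ ω) ∧ ∑ ω, μ ω = 1

/-- A polymatroid on the finite ground set `Z`. -/
def IsPolymatroid {Z : Type*} [DecidableEq Z] (h : Finset Z → ℝ) : Prop :=
  h ∅ = 0 ∧ (∀ A : Finset Z, 0 ≤ h A) ∧ (∀ A B : Finset Z, A ⊆ B → h A ≤ h B) ∧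
    ∀ A B : Finset Z, h (A ∩ B) + h (A ∪ B) ≤ h A + h B

/-- The binary partition random variable `A_⟨α⟩` of a random variable on
`Fin n` (the probability space is taken to be `Fin n` itself, with `X` the
identity): `A_⟨α⟩` records whether `X ∈ α` or `X ∈ αᶜ`.  Unordered partitions
`⟨α⟩ = {α, αᶜ}` are represented by the part `α` not containing the first
element `0` (the paper's convention `1 ∉ α`). -/
def bpVar {n : ℕ} (α : Finset (Fin n)) : Fin n → Bool := fun x => decide (x ∈ α)

lemma shCondEntropy_pos_of_witness {n : ℕ} {S T : Type*} {p : Fin n → ℝ}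
    (hp : ∀ i, 0 < p i) {X : Fin n → S} {Y : Fin n → T} {ω₁ ω₂ : Fin n}
    (hX : X ω₁ = X ω₂) (hY : Y ω₁ ≠ Y ω₂) :
    0 < shCondEntropy p Y X := by
  classical
  have hp0 : ∀ i, 0 ≤ p i := fun i => (hp i).le
  set qX : Fin n → ℝ := fun ω => probOf p {ω' | X ω' = X ω} with hqX
  set qP : Fin n → ℝ := fun ω => probOf p {ω' | (X ω', Y ω') = (X ω, Y ω)} with hqP
  have hsub : ∀ ω : Fin n, {ω' | (X ω', Y ω') = (X ω, Y ω)} ⊆ {ω' | X ω' = X ω} := by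
    intro ω ω' h
    exact congrArg Prod.fst h
  have hqP_pos : ∀ ω, 0 < qP ω := by
    intro ω
    apply Finset.sum_pos' (fun i _ => Set.indicator_nonneg (fun j _ => hp0 j) i)
    refine ⟨ω, Finset.mem_univ ω, ?_⟩
    rw [Set.indicator_of_mem (by simp) p]
    exact hp ω
  have hle : ∀ ω, qP ω ≤ qX ω := fun ω =>
    Finset.sum_le_sum fun i _ =>
      Set.indicator_le_indicator_apply_of_subset (hsub ω) (hp0 i)
  have hqX_pos : ∀ ω, 0 < qX ω := fun ω => lt_of_lt_of_le (hqP_pos ω) (hle ω)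
  have hstrict : qP ω₁ < qX ω₁ := by
    have key : ∀ i : Fin n,
        ({ω' | (X ω', Y ω') = (X ω₁, Y ω₁)} : Set (Fin n)).indicator p i
          + ({ω₂} : Set (Fin n)).indicator p i
          ≤ ({ω' | X ω' = X ω₁} : Set (Fin n)).indicator p i := by
      intro i
      by_cases hi : i = ω₂
      · rw [hi]
        have h1 : ({ω' | (X ω', Y ω') = (X ω₁, Y ω₁)} : Set (Fin n)).indicator p ω₂ = 0 := by
          apply Set.indicator_of_notMem
          simp only [Set.mem_setOf_eq, Prod.mk.injEq, not_and]
          exact fun _ h => hY h.symm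
        have h2 : ({ω₂} : Set (Fin n)).indicator p ω₂ = p ω₂ := Set.indicator_of_mem rfl p
        have h3 : ({ω' | X ω' = X ω₁} : Set (Fin n)).indicator p ω₂ = p ω₂ :=
          Set.indicator_of_mem (show ω₂ ∈ {ω' | X ω' = X ω₁} from hX.symm) p
        rw [h1, h2, h3, zero_add]
      · have h2 : ({ω₂} : Set (Fin n)).indicator p i = 0 :=
          Set.indicator_of_notMem (by simp [hi]) p
        rw [h2, add_zero]
        exact Set.indicator_le_indicator_apply_of_subset (hsub ω₁) (hp0 i)
    have h2 := Finset.sum_le_sum (fun i (_ : i ∈ Finset.univ) => key i)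
    rw [Finset.sum_add_distrib] at h2
    have h3 : ∑ i : Fin n, ({ω₂} : Set (Fin n)).indicator p i = p ω₂ := by
      simp [Set.indicator_apply]
    rw [h3] at h2
    have hpω₂ := hp ω₂
    have : qP ω₁ + p ω₂ ≤ qX ω₁ := h2
    linarith
  have hform : shCondEntropy p Y X
      = ∑ ω, p ω * (Real.logb 2 (qX ω) - Real.logb 2 (qP ω)) := by
    unfold shCondEntropy shEntropy
    rw [← Finset.sum_sub_distrib]
    exact Finset.sum_congr rfl fun ω _ => by ring
  rw [hform]
  apply Finset.sum_pos'
  · intro i _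
    have := Real.logb_le_logb_of_le one_lt_two (hqP_pos i) (hle i)
    have := hp0 i
    nlinarith
  · refine ⟨ω₁, Finset.mem_univ _, ?_⟩
    have := Real.logb_lt_logb one_lt_two (hqP_pos ω₁) hstrict
    have := hp ω₁
    nlinarith

/-- Basis, Lemma 6(3): for a random variable with support
`{1, …, n}` and masses `p_1 ≥ … ≥ p_n > 0`, for every partition `⟨α⟩` there
are partitions `⟨β_1⟩, …, ⟨β_{n-2}⟩` with
`H(A_⟨β_k⟩ | A_⟨α⟩, A_⟨β_1⟩, …, A_⟨β_{k-1}⟩) > 0` for all `k = 1, …, n-2`. -/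
theorem bpVar_basis {n : ℕ} [NeZero n]
    (p : Fin n → ℝ) (hp : ∀ i, 0 < p i) (hsum : ∑ i, p i = 1)
    (hmono : ∀ i j : Fin n, i ≤ j → p j ≤ p i)
    (α : Finset (Fin n)) (hαne : α.Nonempty) (hα0 : 0 ∉ α) :
    ∃ β : Fin (n - 2) → Finset (Fin n),
      (∀ k, (β k).Nonempty ∧ 0 ∉ β k) ∧
      ∀ k : Fin (n - 2),
        0 < shCondEntropy p (bpVar (β k))
          (fun x => (bpVar α x, fun j : Fin k.1 => bpVar (β (Fin.castLE k.2.le j)) x)) := by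
  classical
  by_cases hn3 : n < 3
  · exact ⟨fun _ => ∅, fun k => absurd k.isLt (by omega), fun k => absurd k.isLt (by omega)⟩
  push_neg at hn3
  have ht1 : 0 < α.card := Finset.card_pos.mpr hαne
  have htn : α.card < n := by
    have hne : α ≠ Finset.univ := fun h => hα0 (h ▸ Finset.mem_univ 0)
    simpa using (Finset.card_lt_iff_ne_univ α).mpr hne
  set t := α.card with ht
  have hsc : αᶜ.card = n - t := by rw [Finset.card_compl, Fintype.card_fin]
  let b : Fin t ≃o {x // x ∈ α} := α.orderIsoOfFin rfl
  let a : Fin (n - t) ≃o {x // x ∈ αᶜ} := αᶜ.orderIsoOfFin hsc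
  have hbmem : ∀ i : Fin t, (b i : Fin n) ∈ α := fun i => (b i).2
  have hamem : ∀ i : Fin (n - t), (a i : Fin n) ∉ α := fun i => Finset.mem_compl.mp (a i).2
  have hblt : ∀ i j : Fin t, i < j → (b i : Fin n) < (b j : Fin n) := fun i j h =>
    Subtype.coe_lt_coe.mpr (b.lt_iff_lt.mpr h)
  have halt : ∀ i j : Fin (n - t), i < j → (a i : Fin n) < (a j : Fin n) := fun i j h =>
    Subtype.coe_lt_coe.mpr (a.lt_iff_lt.mpr h)
  set β : Fin (n - 2) → Finset (Fin n) := fun k =>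
    if h : (k : ℕ) < t - 1 then
      α.filter (fun x => (b ⟨k, by omega⟩ : Fin n) < x)
    else
      αᶜ.filter (fun x => (a ⟨(k : ℕ) - (t - 1), by have := k.isLt; omega⟩ : Fin n) < x)
    with hβ
  have hmem1 : ∀ (k : Fin (n - 2)) (hk : (k : ℕ) < t - 1) (x : Fin n),
      x ∈ β k ↔ x ∈ α ∧ (b ⟨k, by omega⟩ : Fin n) < x := by
    intro k hk x
    rw [hβ]
    simp only [dif_pos hk, Finset.mem_filter]
  have hmem2 : ∀ (k : Fin (n - 2)) (hk : ¬ (k : ℕ) < t - 1) (x : Fin n),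
      x ∈ β k ↔ x ∉ α ∧ (a ⟨(k : ℕ) - (t - 1), by have := k.isLt; omega⟩ : Fin n) < x := by
    intro k hk x
    rw [hβ]
    simp only [dif_neg hk, Finset.mem_filter, Finset.mem_compl]
  refine ⟨β, ?_, ?_⟩
  · intro k
    constructor
    · by_cases hk : (k : ℕ) < t - 1
      · refine ⟨(b ⟨(k : ℕ) + 1, by omega⟩ : Fin n), (hmem1 k hk _).mpr ⟨hbmem _, ?_⟩⟩
        exact hblt _ _ (Fin.mk_lt_mk.mpr (Nat.lt_succ_self _))
      · refine ⟨(a ⟨(k : ℕ) - (t - 1) + 1, by have := k.isLt; omega⟩ : Fin n),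
          (hmem2 k hk _).mpr ⟨hamem _, ?_⟩⟩
        exact halt _ _ (Fin.mk_lt_mk.mpr (Nat.lt_succ_self _))
    · by_cases hk : (k : ℕ) < t - 1
      · exact fun h0 => hα0 ((hmem1 k hk 0).mp h0).1
      · intro h0
        have hcon := ((hmem2 k hk 0).mp h0).2
        exact absurd hcon (by simp)
  · intro k
    by_cases hk : (k : ℕ) < t - 1
    · -- phase 1: split inside α
      set w₁ : Fin n := (b ⟨k, by omega⟩ : Fin n) with hw₁
      set w₂ : Fin n := (b ⟨(k : ℕ) + 1, by omega⟩ : Fin n) with hw₂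
      apply shCondEntropy_pos_of_witness hp (ω₁ := w₁) (ω₂ := w₂)
      · rw [Prod.mk.injEq]
        constructor
        · simp only [bpVar]
          rw [decide_eq_decide]
          exact iff_of_true (hbmem _) (hbmem _)
        · funext j
          have hjk : ((Fin.castLE k.2.le j : Fin (n - 2)) : ℕ) < t - 1 := by
            have := j.isLt; have hc : ((Fin.castLE k.2.le j : Fin (n - 2)) : ℕ) = (j : ℕ) := rfl; omega
          have h₁ : w₁ ∈ β (Fin.castLE k.2.le j) := (hmem1 _ hjk _).mpr
            ⟨hbmem _, hblt _ _ (Fin.mk_lt_mk.mpr (by have := j.isLt; have hc : ((Fin.castLE k.2.le j : Fin (n - 2)) : ℕ) = (j : ℕ) := rfl; omega))⟩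
          have h₂ : w₂ ∈ β (Fin.castLE k.2.le j) := (hmem1 _ hjk _).mpr
            ⟨hbmem _, hblt _ _ (Fin.mk_lt_mk.mpr (by have := j.isLt; have hc : ((Fin.castLE k.2.le j : Fin (n - 2)) : ℕ) = (j : ℕ) := rfl; omega))⟩
          simp only [bpVar]
          rw [decide_eq_decide]
          simp [h₁, h₂]
      · have h₁ : w₁ ∉ β k := fun h => lt_irrefl _ ((hmem1 k hk _).mp h).2
        have h₂ : w₂ ∈ β k := (hmem1 k hk _).mpr
          ⟨hbmem _, hblt _ _ (Fin.mk_lt_mk.mpr (Nat.lt_succ_self _))⟩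
        simp [bpVar, h₁, h₂]
    · -- phase 2: split inside αᶜ
      set w₁ : Fin n := (a ⟨(k : ℕ) - (t - 1), by have := k.isLt; omega⟩ : Fin n) with hw₁
      set w₂ : Fin n := (a ⟨(k : ℕ) - (t - 1) + 1, by have := k.isLt; omega⟩ : Fin n) with hw₂
      apply shCondEntropy_pos_of_witness hp (ω₁ := w₁) (ω₂ := w₂)
      · rw [Prod.mk.injEq]
        constructor
        · simp only [bpVar]
          rw [decide_eq_decide]
          exact iff_of_false (hamem _) (hamem _)
        · funext j
          by_cases hj : ((Fin.castLE k.2.le j : Fin (n - 2)) : ℕ) < t - 1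
          · have h₁ : w₁ ∉ β (Fin.castLE k.2.le j) := fun h =>
              hamem _ ((hmem1 _ hj _).mp h).1
            have h₂ : w₂ ∉ β (Fin.castLE k.2.le j) := fun h =>
              hamem _ ((hmem1 _ hj _).mp h).1
            simp only [bpVar]
            rw [decide_eq_decide]
            simp [h₁, h₂]
          · have h₁ : w₁ ∈ β (Fin.castLE k.2.le j) := (hmem2 _ hj _).mpr
              ⟨hamem _, halt _ _ (Fin.mk_lt_mk.mpr (by have := j.isLt; have hc : ((Fin.castLE k.2.le j : Fin (n - 2)) : ℕ) = (j : ℕ) := rfl; omega))⟩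
            have h₂ : w₂ ∈ β (Fin.castLE k.2.le j) := (hmem2 _ hj _).mpr
              ⟨hamem _, halt _ _ (Fin.mk_lt_mk.mpr (by have := j.isLt; have hc : ((Fin.castLE k.2.le j : Fin (n - 2)) : ℕ) = (j : ℕ) := rfl; omega))⟩
            simp only [bpVar]
            rw [decide_eq_decide]
            simp [h₁, h₂]
      · have h₁ : w₁ ∉ β k := fun h => lt_irrefl _ ((hmem2 k hk _).mp h).2
        have h₂ : w₂ ∈ β k := (hmem2 k hk _).mpr
          ⟨hamem _, halt _ _ (Fin.mk_lt_mk.mpr (Nat.lt_succ_self _))⟩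
        simp [bpVar, h₁, h₂]
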